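/- arXiv:1602.02491 — 2 statements merged into one kernel-verified Lean document; each statement's English description precedes it below -/
import Mathlib

section
/- Condition (A-v) implies condition (A-iii): in the limiting regime m → ∞, if K₁(A)/K₂(A) → 0 then K₁(A)/Δ(A)² → 0, where Δ(A), K₁(A), K₂(A) are defined from positive semidefinite matrices Σ₁, Σ₂, a vector μ₁-μ₂, sample sizes n₁,n₂ → ∞, and a positive semidefinite matrix A as in the two-sample statistic. -/
open Matrix Filter

section
open scoped ComplexOrder

/-- The positive semidefinite square root of a positive semidefinite matrix
(the definition Mathlib had in December 2024, since removed). -/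
noncomputable def Matrix.PosSemidef.sqrt {n 𝕜 : Type*} [Fintype n] [RCLike 𝕜] [DecidableEq n]
    {A : Matrix n n 𝕜} (hA : A.PosSemidef) : Matrix n n 𝕜 :=
  hA.1.eigenvectorUnitary.1 * diagonal ((↑) ∘ (√·) ∘ hA.1.eigenvalues) *
  (star hA.1.eigenvectorUnitary : Matrix n n 𝕜)

end

lemma Matrix.PosSemidef.posSemidef_sqrt {n : Type*} [Fintype n] [DecidableEq n]
    {A : Matrix n n ℝ} (hA : A.PosSemidef) : hA.sqrt.PosSemidef := by
  have hD : (diagonal ((RCLike.ofReal : ℝ → ℝ) ∘ (√·) ∘ hA.1.eigenvalues) : Matrix n n ℝ).PosSemidef :=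
    posSemidef_diagonal_iff.mpr fun i => by simp [Real.sqrt_nonneg]
  have h := hD.conjTranspose_mul_mul_same (star hA.1.eigenvectorUnitary : Matrix n n ℝ)
  rw [← Matrix.star_eq_conjTranspose, star_star] at h
  exact h

lemma Matrix.PosSemidef.sqrt_mul_self {n : Type*} [Fintype n] [DecidableEq n]
    {A : Matrix n n ℝ} (hA : A.PosSemidef) : hA.sqrt * hA.sqrt = A := by
  have hU : (star hA.1.eigenvectorUnitary : Matrix n n ℝ) * hA.1.eigenvectorUnitary.1 = 1 :=
    Unitary.coe_star_mul_self _
  have hDD : (diagonal ((RCLike.ofReal : ℝ → ℝ) ∘ (√·) ∘ hA.1.eigenvalues) : Matrix n n ℝ) *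
      diagonal ((RCLike.ofReal : ℝ → ℝ) ∘ (√·) ∘ hA.1.eigenvalues) = diagonal (RCLike.ofReal ∘ hA.1.eigenvalues) := by
    rw [diagonal_mul_diagonal]
    congr 1; funext i
    simp [Real.mul_self_sqrt (hA.eigenvalues_nonneg i)]
  conv_rhs => rw [hA.1.spectral_theorem, Unitary.conjStarAlgAut_apply]
  simp only [Matrix.PosSemidef.sqrt]
  calc _ = hA.1.eigenvectorUnitary.1 * diagonal ((RCLike.ofReal : ℝ → ℝ) ∘ (√·) ∘ hA.1.eigenvalues) *
        ((star hA.1.eigenvectorUnitary : Matrix n n ℝ) * hA.1.eigenvectorUnitary.1) *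
        diagonal ((RCLike.ofReal : ℝ → ℝ) ∘ (√·) ∘ hA.1.eigenvalues) *
        (star hA.1.eigenvectorUnitary : Matrix n n ℝ) := by simp only [Matrix.mul_assoc]
    _ = _ := by rw [hU, Matrix.mul_one, Matrix.mul_assoc _ (diagonal _) (diagonal _), hDD]

/-- Trace of a real PSD matrix is nonnegative. -/
lemma trace_nonneg_of_posSemidef {p : ℕ} {M : Matrix (Fin p) (Fin p) ℝ}
    (hM : M.PosSemidef) : 0 ≤ M.trace := by
  rw [Matrix.trace]
  refine Finset.sum_nonneg fun i _ => ?_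
  have h := hM.dotProduct_mulVec_nonneg (Pi.single i 1)
  simpa [Matrix.diag, Matrix.mulVec, dotProduct, Pi.single_apply,
    Finset.mul_sum, mul_comm] using h

/-- Trace of a product of real PSD matrices is nonnegative. -/
lemma trace_mul_nonneg_of_posSemidef {p : ℕ} {M N : Matrix (Fin p) (Fin p) ℝ}
    (hM : M.PosSemidef) (hN : N.PosSemidef) : 0 ≤ (M * N).trace := by
  have h := hM.conjTranspose_mul_mul_same hN.sqrt
  rw [hN.posSemidef_sqrt.1] at h
  have h2 := trace_nonneg_of_posSemidef h
  rw [Matrix.trace_mul_cycle, hN.sqrt_mul_self] at h2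
  rwa [Matrix.trace_mul_comm]

/-- Cauchy–Schwarz (Frobenius) bound on a quadratic form:
`μᵀ S μ ≤ √(tr(S²)) · (μᵀμ)` for real PSD `S`. -/
lemma quad_le_sqrt_trace_mul {p : ℕ} {S : Matrix (Fin p) (Fin p) ℝ}
    (hS : S.PosSemidef) (μ : Fin p → ℝ) :
    μ ⬝ᵥ (S *ᵥ μ) ≤ Real.sqrt ((S * S).trace) * (μ ⬝ᵥ μ) := by
  have hsymm : ∀ i j, S j i = S i j := by
    intro i j
    have := congrFun (congrFun hS.1 i) j
    simpa [Matrix.conjTranspose_apply] using this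
  have hq : μ ⬝ᵥ (S *ᵥ μ) = ∑ ij : Fin p × Fin p, S ij.1 ij.2 * (μ ij.1 * μ ij.2) := by
    rw [Fintype.sum_prod_type]
    simp only [dotProduct, Matrix.mulVec, Finset.mul_sum]
    exact Finset.sum_congr rfl fun i _ => Finset.sum_congr rfl fun j _ => by ring
  have htr : (S * S).trace = ∑ ij : Fin p × Fin p, (S ij.1 ij.2) ^ 2 := by
    rw [Fintype.sum_prod_type, Matrix.trace]
    simp only [Matrix.diag, Matrix.mul_apply]
    exact Finset.sum_congr rfl fun i _ => Finset.sum_congr rfl fun j _ => by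
      rw [hsymm i j]; ring
  have hΔ : (μ ⬝ᵥ μ) ^ 2 = ∑ ij : Fin p × Fin p, (μ ij.1 * μ ij.2) ^ 2 := by
    rw [Fintype.sum_prod_type]
    simp only [dotProduct, sq, Finset.sum_mul_sum]
    exact Finset.sum_congr rfl fun i _ => Finset.sum_congr rfl fun j _ => by ring
  have hqnonneg : 0 ≤ μ ⬝ᵥ (S *ᵥ μ) := by
    have := hS.dotProduct_mulVec_nonneg μ
    simpa using this
  have hΔnonneg : 0 ≤ μ ⬝ᵥ μ := by
    rw [dotProduct]
    exact Finset.sum_nonneg fun i _ => mul_self_nonneg _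
  have htrnonneg : 0 ≤ (S * S).trace := by
    rw [htr]; exact Finset.sum_nonneg fun _ _ => sq_nonneg _
  have hcs : (μ ⬝ᵥ (S *ᵥ μ)) ^ 2 ≤ (S * S).trace * (μ ⬝ᵥ μ) ^ 2 := by
    rw [hq, htr, hΔ]
    exact Finset.sum_mul_sq_le_sq_mul_sq Finset.univ _ _
  calc μ ⬝ᵥ (S *ᵥ μ) = Real.sqrt ((μ ⬝ᵥ (S *ᵥ μ)) ^ 2) := (Real.sqrt_sq hqnonneg).symm
    _ ≤ Real.sqrt ((S * S).trace * (μ ⬝ᵥ μ) ^ 2) := Real.sqrt_le_sqrt hcs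
    _ = Real.sqrt ((S * S).trace) * (μ ⬝ᵥ μ) := by
        rw [Real.sqrt_mul htrnonneg, Real.sqrt_sq hΔnonneg]

/-- Proposition 1: condition (A-v) implies condition (A-iii). In the limiting
regime `m → ∞` (with `p, n₁, n₂ → ∞`), if `K₁(A)/K₂(A) → 0` then
`K₁(A)/Δ(A)² → 0`. -/
theorem Av_implies_Aiii
    (pd : ℕ → ℕ) (hpd : Tendsto pd atTop atTop)
    (n₁ n₂ : ℕ → ℝ) (hn₁ : ∀ m, 2 ≤ n₁ m) (hn₂ : ∀ m, 2 ≤ n₂ m)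
    (hn₁top : Tendsto n₁ atTop atTop) (hn₂top : Tendsto n₂ atTop atTop)
    (A Sig₁ Sig₂ : ∀ m, Matrix (Fin (pd m)) (Fin (pd m)) ℝ)
    (hA : ∀ m, (A m).PosSemidef)
    (hSig₁ : ∀ m, (Sig₁ m).PosSemidef) (hSig₂ : ∀ m, (Sig₂ m).PosSemidef)
    (μ₁ μ₂ : ∀ m, Fin (pd m) → ℝ) :
    let μA : ∀ m, Fin (pd m) → ℝ := fun m => (hA m).sqrt *ᵥ (μ₁ m - μ₂ m)
    let S₁ : ∀ m, Matrix (Fin (pd m)) (Fin (pd m)) ℝ :=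
      fun m => (hA m).sqrt * Sig₁ m * (hA m).sqrt
    let S₂ : ∀ m, Matrix (Fin (pd m)) (Fin (pd m)) ℝ :=
      fun m => (hA m).sqrt * Sig₂ m * (hA m).sqrt
    let Δ : ℕ → ℝ := fun m => μA m ⬝ᵥ μA m
    let K₁ : ℕ → ℝ := fun m =>
      2 * ((S₁ m * S₁ m).trace / (n₁ m * (n₁ m - 1))
            + (S₂ m * S₂ m).trace / (n₂ m * (n₂ m - 1)))
        + 4 * (S₁ m * S₂ m).trace / (n₁ m * n₂ m)
    let K₂ : ℕ → ℝ := fun m =>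
      4 * ((μA m ⬝ᵥ (S₁ m *ᵥ μA m)) / n₁ m + (μA m ⬝ᵥ (S₂ m *ᵥ μA m)) / n₂ m)
    (∀ m, 0 < Δ m) → (∀ m, 0 < K₂ m) →
      Tendsto (fun m => K₁ m / K₂ m) atTop (nhds 0) →
      Tendsto (fun m => K₁ m / (Δ m) ^ 2) atTop (nhds 0) := by
  intro μA S₁ S₂ Δ K₁ K₂ hΔ hK₂ hv
  -- PSD facts
  have hS₁ : ∀ m, (S₁ m).PosSemidef := by
    intro m
    have h := (hSig₁ m).conjTranspose_mul_mul_same (hA m).sqrt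
    rwa [(hA m).posSemidef_sqrt.1] at h
  have hS₂ : ∀ m, (S₂ m).PosSemidef := by
    intro m
    have h := (hSig₂ m).conjTranspose_mul_mul_same (hA m).sqrt
    rwa [(hA m).posSemidef_sqrt.1] at h
  have hn₁pos : ∀ m, (0:ℝ) < n₁ m := fun m => lt_of_lt_of_le two_pos (hn₁ m)
  have hn₂pos : ∀ m, (0:ℝ) < n₂ m := fun m => lt_of_lt_of_le two_pos (hn₂ m)
  have hn₁1 : ∀ m, (0:ℝ) < n₁ m - 1 := fun m => by linarith [hn₁ m]
  have hn₂1 : ∀ m, (0:ℝ) < n₂ m - 1 := fun m => by linarith [hn₂ m]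
  have ha : ∀ m, 0 ≤ (S₁ m * S₁ m).trace :=
    fun m => trace_mul_nonneg_of_posSemidef (hS₁ m) (hS₁ m)
  have hb : ∀ m, 0 ≤ (S₂ m * S₂ m).trace :=
    fun m => trace_mul_nonneg_of_posSemidef (hS₂ m) (hS₂ m)
  have hc : ∀ m, 0 ≤ (S₁ m * S₂ m).trace :=
    fun m => trace_mul_nonneg_of_posSemidef (hS₁ m) (hS₂ m)
  have hK₁nonneg : ∀ m, 0 ≤ K₁ m := by
    intro m
    show (0:ℝ) ≤ 2 * ((S₁ m * S₁ m).trace / (n₁ m * (n₁ m - 1))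
            + (S₂ m * S₂ m).trace / (n₂ m * (n₂ m - 1)))
        + 4 * (S₁ m * S₂ m).trace / (n₁ m * n₂ m)
    have h1 : 0 ≤ (S₁ m * S₁ m).trace / (n₁ m * (n₁ m - 1)) :=
      div_nonneg (ha m) (mul_nonneg (hn₁pos m).le (hn₁1 m).le)
    have h2 : 0 ≤ (S₂ m * S₂ m).trace / (n₂ m * (n₂ m - 1)) :=
      div_nonneg (hb m) (mul_nonneg (hn₂pos m).le (hn₂1 m).le)
    have h3 : 0 ≤ 4 * (S₁ m * S₂ m).trace / (n₁ m * n₂ m) :=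
      div_nonneg (by linarith [hc m]) (mul_nonneg (hn₁pos m).le (hn₂pos m).le)
    linarith
  -- the key bound: K₂ ≤ 8 Δ √K₁
  have hK₂le : ∀ m, K₂ m ≤ 8 * Δ m * Real.sqrt (K₁ m) := by
    intro m
    set a := (S₁ m * S₁ m).trace with hadef
    set b := (S₂ m * S₂ m).trace with hbdef
    have hp : μA m ⬝ᵥ (S₁ m *ᵥ μA m) ≤ Real.sqrt a * Δ m :=
      quad_le_sqrt_trace_mul (hS₁ m) (μA m)
    have hqb : μA m ⬝ᵥ (S₂ m *ᵥ μA m) ≤ Real.sqrt b * Δ m :=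
      quad_le_sqrt_trace_mul (hS₂ m) (μA m)
    have hterm3 : 0 ≤ 4 * (S₁ m * S₂ m).trace / (n₁ m * n₂ m) :=
      div_nonneg (by linarith [hc m]) (mul_nonneg (hn₁pos m).le (hn₂pos m).le)
    have hK₁eq : K₁ m = 2 * (a / (n₁ m * (n₁ m - 1))
        + b / (n₂ m * (n₂ m - 1))) + 4 * (S₁ m * S₂ m).trace / (n₁ m * n₂ m) := rfl
    have hta : 0 ≤ a / (n₁ m * (n₁ m - 1)) :=
      div_nonneg (ha m) (mul_nonneg (hn₁pos m).le (hn₁1 m).le)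
    have htb : 0 ≤ b / (n₂ m * (n₂ m - 1)) :=
      div_nonneg (hb m) (mul_nonneg (hn₂pos m).le (hn₂1 m).le)
    have hsa : Real.sqrt a / n₁ m ≤ Real.sqrt (K₁ m) := by
      have h2 : a / (n₁ m) ^ 2 ≤ a / (n₁ m * (n₁ m - 1)) := by
        apply div_le_div_of_nonneg_left (ha m) (mul_pos (hn₁pos m) (hn₁1 m))
        nlinarith [hn₁pos m]
      have h1 : a / (n₁ m) ^ 2 ≤ K₁ m := by rw [hK₁eq]; linarith
      calc Real.sqrt a / n₁ m = Real.sqrt (a / (n₁ m) ^ 2) := by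
            rw [Real.sqrt_div (ha m), Real.sqrt_sq (hn₁pos m).le]
        _ ≤ Real.sqrt (K₁ m) := Real.sqrt_le_sqrt h1
    have hsb : Real.sqrt b / n₂ m ≤ Real.sqrt (K₁ m) := by
      have h2 : b / (n₂ m) ^ 2 ≤ b / (n₂ m * (n₂ m - 1)) := by
        apply div_le_div_of_nonneg_left (hb m) (mul_pos (hn₂pos m) (hn₂1 m))
        nlinarith [hn₂pos m]
      have h1 : b / (n₂ m) ^ 2 ≤ K₁ m := by rw [hK₁eq]; linarith
      calc Real.sqrt b / n₂ m = Real.sqrt (b / (n₂ m) ^ 2) := by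
            rw [Real.sqrt_div (hb m), Real.sqrt_sq (hn₂pos m).le]
        _ ≤ Real.sqrt (K₁ m) := Real.sqrt_le_sqrt h1
    have hK₂eq : K₂ m = 4 * ((μA m ⬝ᵥ (S₁ m *ᵥ μA m)) / n₁ m
        + (μA m ⬝ᵥ (S₂ m *ᵥ μA m)) / n₂ m) := rfl
    have e1 : (μA m ⬝ᵥ (S₁ m *ᵥ μA m)) / n₁ m ≤ Δ m * Real.sqrt (K₁ m) := by
      have : (μA m ⬝ᵥ (S₁ m *ᵥ μA m)) / n₁ m ≤ Real.sqrt a * Δ m / n₁ m :=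
        div_le_div_of_nonneg_right hp (hn₁pos m).le
      calc (μA m ⬝ᵥ (S₁ m *ᵥ μA m)) / n₁ m ≤ Real.sqrt a * Δ m / n₁ m := this
        _ = Δ m * (Real.sqrt a / n₁ m) := by ring
        _ ≤ Δ m * Real.sqrt (K₁ m) :=
            mul_le_mul_of_nonneg_left hsa (hΔ m).le
    have e2 : (μA m ⬝ᵥ (S₂ m *ᵥ μA m)) / n₂ m ≤ Δ m * Real.sqrt (K₁ m) := by
      have : (μA m ⬝ᵥ (S₂ m *ᵥ μA m)) / n₂ m ≤ Real.sqrt b * Δ m / n₂ m :=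
        div_le_div_of_nonneg_right hqb (hn₂pos m).le
      calc (μA m ⬝ᵥ (S₂ m *ᵥ μA m)) / n₂ m ≤ Real.sqrt b * Δ m / n₂ m := this
        _ = Δ m * (Real.sqrt b / n₂ m) := by ring
        _ ≤ Δ m * Real.sqrt (K₁ m) :=
            mul_le_mul_of_nonneg_left hsb (hΔ m).le
    rw [hK₂eq]; linarith
  -- hence √K₁/Δ ≤ 8 K₁/K₂
  have hkey : ∀ m, Real.sqrt (K₁ m) / Δ m ≤ 8 * (K₁ m / K₂ m) := by
    intro m
    rw [mul_div_assoc', div_le_div_iff₀ (hΔ m) (hK₂ m)]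
    nlinarith [Real.sq_sqrt (hK₁nonneg m), Real.sqrt_nonneg (K₁ m), hK₂le m,
      (hΔ m), (hK₂ m), mul_le_mul_of_nonneg_left (hK₂le m) (Real.sqrt_nonneg (K₁ m))]
  -- pointwise squeeze bound
  have hub : ∀ m, K₁ m / (Δ m) ^ 2 ≤ 64 * (K₁ m / K₂ m) ^ 2 := by
    intro m
    have h0 : 0 ≤ Real.sqrt (K₁ m) / Δ m := div_nonneg (Real.sqrt_nonneg _) (hΔ m).le
    have h2 : (Real.sqrt (K₁ m) / Δ m) ^ 2 ≤ (8 * (K₁ m / K₂ m)) ^ 2 :=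
      pow_le_pow_left₀ h0 (hkey m) 2
    have h3 : (Real.sqrt (K₁ m) / Δ m) ^ 2 = K₁ m / (Δ m) ^ 2 := by
      rw [div_pow, Real.sq_sqrt (hK₁nonneg m)]
    have h4 : (8 * (K₁ m / K₂ m)) ^ 2 = 64 * (K₁ m / K₂ m) ^ 2 := by ring
    rw [← h3, ← h4]; exact h2
  have hlb : ∀ m, 0 ≤ K₁ m / (Δ m) ^ 2 :=
    fun m => div_nonneg (hK₁nonneg m) (sq_nonneg _)
  have hupper : Tendsto (fun m => 64 * (K₁ m / K₂ m) ^ 2) atTop (nhds 0) := by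
    have := (hv.pow 2).const_mul (64:ℝ)
    simpa using this
  exact tendsto_of_tendsto_of_tendsto_of_le_of_le tendsto_const_nhds hupper
    (fun m => hlb m) (fun m => hub m)
end

section
/- Under conditions (A-ii) and (A-iv), K(A)/K₁(A) → 1 as m → ∞; that is, if λ_max(Σ_{i,A})²/tr(Σ_{i,A}²) → 0 for i = 1,2 and limsup Δ(A)²/K₁(A) < ∞, then K₂(A)/K₁(A) → 0. -/
open Matrix Filter

section Aux
set_option linter.unusedSectionVars false
variable {n : Type*} [Fintype n] [DecidableEq n]

lemma psd_sqrt_isHermitian {N : Matrix n n ℝ} (hN : N.PosSemidef) : hN.sqrt.IsHermitian := by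
  unfold Matrix.PosSemidef.sqrt
  simp [Matrix.IsHermitian, Matrix.conjTranspose_mul, Matrix.star_eq_conjTranspose,
    Matrix.diagonal_conjTranspose, Matrix.mul_assoc]

lemma psd_sqrt_mul_self {N : Matrix n n ℝ} (hN : N.PosSemidef) : hN.sqrt * hN.sqrt = N := by
  have hspec := hN.1.spectral_theorem
  rw [RCLike.ofReal_real_eq_id, Unitary.conjStarAlgAut_apply] at hspec
  unfold Matrix.PosSemidef.sqrt
  set U : Matrix n n ℝ := (hN.1.eigenvectorUnitary : Matrix n n ℝ) with hU
  have hUU : star U * U = 1 := Matrix.mem_unitaryGroup_iff'.mp hN.1.eigenvectorUnitary.2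
  set D : Matrix n n ℝ := diagonal ((↑) ∘ (√·) ∘ hN.1.eigenvalues) with hD
  calc U * D * star U * (U * D * star U) = U * (D * D) * star U := by
        simp only [mul_assoc]
        rw [← mul_assoc (star U) U, hUU, one_mul]
    _ = N := by
        conv_rhs => rw [hspec]
        rw [hD, diagonal_mul_diagonal]
        congr 2
        refine congrArg diagonal (funext fun i => ?_)
        simp [Real.mul_self_sqrt (hN.eigenvalues_nonneg i)]

lemma trace_nonneg_of_psd {M : Matrix n n ℝ} (hM : M.PosSemidef) : 0 ≤ M.trace := by
  rw [Matrix.trace]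
  refine Finset.sum_nonneg fun i _ => ?_
  simpa [dotProduct, Matrix.mulVec, Pi.single_apply] using hM.dotProduct_mulVec_nonneg (Pi.single i 1)

lemma quad_nonneg {M : Matrix n n ℝ} (hM : M.PosSemidef) (x : n → ℝ) :
    0 ≤ x ⬝ᵥ (M *ᵥ x) := by simpa using hM.dotProduct_mulVec_nonneg x

lemma trace_mul_psd_nonneg {M N : Matrix n n ℝ} (hM : M.PosSemidef) (hN : N.PosSemidef) :
    0 ≤ (M * N).trace := by
  have h1 : M * N = M * (hN.sqrt * hN.sqrt) := by rw [psd_sqrt_mul_self hN]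
  have h2 : (M * (hN.sqrt * hN.sqrt)).trace = (hN.sqrt * M * hN.sqrt).trace := by
    rw [← Matrix.trace_mul_cycle, mul_assoc]
  rw [h1, h2]
  refine trace_nonneg_of_psd ?_
  have h3 := hM.conjTranspose_mul_mul_same hN.sqrt
  rwa [(psd_sqrt_isHermitian hN).eq] at h3

lemma quad_eq_sum {M : Matrix n n ℝ} (hH : M.IsHermitian) (μ : n → ℝ) :
    μ ⬝ᵥ (M *ᵥ μ) = ∑ i, hH.eigenvalues i * ((star (hH.eigenvectorUnitary : Matrix n n ℝ) *ᵥ μ) i)^2 := by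
  set U : Matrix n n ℝ := (hH.eigenvectorUnitary : Matrix n n ℝ) with hU
  have hspec := hH.spectral_theorem
  rw [RCLike.ofReal_real_eq_id, Unitary.conjStarAlgAut_apply] at hspec
  conv_lhs => rw [hspec]
  set w : n → ℝ := star U *ᵥ μ with hw
  have h1 : μ ⬝ᵥ ((U * diagonal (id ∘ hH.eigenvalues) * star U) *ᵥ μ)
      = w ⬝ᵥ (diagonal hH.eigenvalues *ᵥ w) := by
    rw [← mulVec_mulVec, ← mulVec_mulVec, Matrix.dotProduct_mulVec]
    congr 1
    rw [hw, Matrix.star_eq_conjTranspose, conjTranspose_eq_transpose_of_trivial,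
      ← Matrix.vecMul_transpose, Matrix.transpose_transpose]
  rw [h1]
  simp only [dotProduct, Matrix.mulVec_diagonal]
  exact Finset.sum_congr rfl fun i _ => by ring

lemma dot_self_eq_sum {M : Matrix n n ℝ} (hH : M.IsHermitian) (μ : n → ℝ) :
    μ ⬝ᵥ μ = ∑ i, ((star (hH.eigenvectorUnitary : Matrix n n ℝ) *ᵥ μ) i)^2 := by
  set U : Matrix n n ℝ := (hH.eigenvectorUnitary : Matrix n n ℝ) with hU
  set w : n → ℝ := star U *ᵥ μ with hw
  have h2 : w ⬝ᵥ w = (U *ᵥ w) ⬝ᵥ μ := by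
    conv_lhs => rw [hw, Matrix.dotProduct_mulVec]
    congr 1
    rw [Matrix.star_eq_conjTranspose, conjTranspose_eq_transpose_of_trivial,
      Matrix.vecMul_transpose]
    congr 1
  have h3 : U *ᵥ w = μ := by
    rw [hw, mulVec_mulVec, Matrix.mem_unitaryGroup_iff.mp hH.eigenvectorUnitary.2, one_mulVec]
  calc μ ⬝ᵥ μ = (U *ᵥ w) ⬝ᵥ μ := by rw [h3]
    _ = w ⬝ᵥ w := h2.symm
    _ = ∑ i, w i ^ 2 := by simp [dotProduct, pow_two]

lemma trace_sq_eq_sum {M : Matrix n n ℝ} (hH : M.IsHermitian) :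
    (M * M).trace = ∑ i, hH.eigenvalues i ^ 2 := by
  have hspec := hH.spectral_theorem
  rw [RCLike.ofReal_real_eq_id, Unitary.conjStarAlgAut_apply] at hspec
  set U : Matrix n n ℝ := (hH.eigenvectorUnitary : Matrix n n ℝ) with hU
  set D : Matrix n n ℝ := diagonal (id ∘ hH.eigenvalues) with hD
  have hUU : star U * U = 1 := Matrix.mem_unitaryGroup_iff'.mp hH.eigenvectorUnitary.2
  have key : U * D * star U * (U * D * star U) = U * (D * D) * star U := by
    simp only [mul_assoc]
    rw [← mul_assoc (star U) U, hUU, one_mul]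
  conv_lhs => rw [hspec]
  rw [key, Matrix.trace_mul_cycle, ← mul_assoc, hUU, one_mul, hD]
  simp [Matrix.diagonal_mul_diagonal, Matrix.trace_diagonal, pow_two]

variable [Nonempty n]

lemma sup_eig_nonneg {M : Matrix n n ℝ} (hM : M.PosSemidef) :
    0 ≤ ⨆ i, hM.1.eigenvalues i :=
  le_trans (hM.eigenvalues_nonneg (Classical.arbitrary n))
    (le_ciSup (Set.Finite.bddAbove (Set.finite_range _)) _)

lemma sup_sq_le_trace {M : Matrix n n ℝ} (hM : M.PosSemidef) :
    (⨆ i, hM.1.eigenvalues i) ^ 2 ≤ (M * M).trace := by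
  obtain ⟨i₀, hi₀⟩ := Finite.exists_max hM.1.eigenvalues
  have hsup : (⨆ i, hM.1.eigenvalues i) = hM.1.eigenvalues i₀ :=
    le_antisymm (ciSup_le hi₀) (le_ciSup (Set.Finite.bddAbove (Set.finite_range _)) _)
  rw [hsup, trace_sq_eq_sum hM.1]
  exact Finset.single_le_sum (f := fun i => hM.1.eigenvalues i ^ 2) (fun i _ => sq_nonneg _) (Finset.mem_univ i₀)

lemma quad_le_sup {M : Matrix n n ℝ} (hM : M.PosSemidef) (μ : n → ℝ) :
    μ ⬝ᵥ (M *ᵥ μ) ≤ (⨆ i, hM.1.eigenvalues i) * (μ ⬝ᵥ μ) := by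
  rw [quad_eq_sum hM.1 μ, dot_self_eq_sum hM.1 μ, Finset.mul_sum]
  refine Finset.sum_le_sum fun i _ => ?_
  exact mul_le_mul_of_nonneg_right
    (le_ciSup (Set.Finite.bddAbove (Set.finite_range _)) _) (sq_nonneg _)

lemma term_bound {M : Matrix n n ℝ} (hM : M.PosSemidef) (μ : n → ℝ) {N K C : ℝ}
    (hN : 2 ≤ N) (hK : 0 < K)
    (htr : (M * M).trace / (N * (N - 1)) ≤ K / 2)
    (hΔ : (μ ⬝ᵥ μ) ^ 2 ≤ C * K) :
    μ ⬝ᵥ (M *ᵥ μ) / N ≤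
      ((⨆ i, hM.1.eigenvalues i) / Real.sqrt ((M * M).trace)) *
        (Real.sqrt C * (K / Real.sqrt 2)) := by
  set lam := ⨆ i, hM.1.eigenvalues i with hlam
  set t := (M * M).trace with ht
  set Δv := μ ⬝ᵥ μ with hΔv
  have hN0 : (0:ℝ) < N := by linarith
  have hlam0 : 0 ≤ lam := sup_eig_nonneg hM
  have hlt : lam ^ 2 ≤ t := sup_sq_le_trace hM
  have ht0 : 0 ≤ t := le_trans (sq_nonneg _) hlt
  have hΔ0 : 0 ≤ Δv := Finset.sum_nonneg fun i _ => mul_self_nonneg _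
  have hC0 : 0 ≤ C * K := le_trans (sq_nonneg _) hΔ
  have hC0' : 0 ≤ C := nonneg_of_mul_nonneg_right (by linarith [hC0] : (0:ℝ) ≤ K * C) hK
  -- Δv ≤ √C * √K
  have hΔle : Δv ≤ Real.sqrt C * Real.sqrt K := by
    have := Real.sqrt_le_sqrt hΔ
    rwa [Real.sqrt_sq hΔ0, Real.sqrt_mul hC0'] at this
  -- √t / N ≤ √(K/2)
  have htN : Real.sqrt t / N ≤ Real.sqrt (K / 2) := by
    have h1 : t / N ^ 2 ≤ t / (N * (N - 1)) := by
      apply div_le_div_of_nonneg_left ht0 (by nlinarith) (by nlinarith)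
    have h2 : t ≤ N ^ 2 * (K / 2) := by
      rw [← div_le_iff₀' (by positivity : (0:ℝ) < N ^ 2)]
      calc t / N ^ 2 ≤ t / (N * (N-1)) := h1
        _ ≤ K / 2 := htr
    have h3 := Real.sqrt_le_sqrt h2
    rw [Real.sqrt_mul (sq_nonneg N), Real.sqrt_sq hN0.le] at h3
    rw [div_le_iff₀ hN0, mul_comm]
    exact h3
  -- lam ≤ (lam/√t) * √t
  have hlamle : lam ≤ lam / Real.sqrt t * Real.sqrt t := by
    rcases eq_or_lt_of_le ht0 with h | h
    · have : lam = 0 := by nlinarith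
      simp [this]
    · rw [div_mul_cancel₀ _ (by positivity)]
  have he0 : 0 ≤ lam / Real.sqrt t := by positivity
  -- quadratic bound
  have hq : μ ⬝ᵥ (M *ᵥ μ) ≤ lam * Δv := quad_le_sup hM μ
  have hq0 : 0 ≤ μ ⬝ᵥ (M *ᵥ μ) := quad_nonneg hM μ
  have hKsqrt : Real.sqrt K * Real.sqrt (K / 2) = K / Real.sqrt 2 := by
    rw [← Real.sqrt_mul hK.le, show K * (K / 2) = K ^ 2 / 2 by ring,
      Real.sqrt_div (sq_nonneg K), Real.sqrt_sq hK.le]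
  calc μ ⬝ᵥ (M *ᵥ μ) / N ≤ lam * Δv / N := by gcongr
    _ ≤ (lam / Real.sqrt t * Real.sqrt t) * (Real.sqrt C * Real.sqrt K) / N := by
        gcongr
    _ = (lam / Real.sqrt t) * (Real.sqrt C * (Real.sqrt K * (Real.sqrt t / N))) := by ring
    _ ≤ (lam / Real.sqrt t) * (Real.sqrt C * (Real.sqrt K * Real.sqrt (K/2))) := by
        gcongr
    _ = (lam / Real.sqrt t) * (Real.sqrt C * (K / Real.sqrt 2)) := by rw [hKsqrt]

end Aux


set_option maxHeartbeats 1000000 in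
/-- Lemma 1: under (A-ii) and (A-iv), `K(A)/K₁(A) → 1` as `m → ∞`; i.e. if
`λ_max(Σ_{i,A})²/tr(Σ_{i,A}²) → 0` for `i = 1,2` and `limsup Δ(A)²/K₁(A) < ∞`,
then `K₂(A)/K₁(A) → 0`. -/
theorem K2_div_K1_tendsto_zero
    (pd : ℕ → ℕ) (hp : ∀ m, 0 < pd m) (hpdtop : Tendsto pd atTop atTop)
    (n₁ n₂ : ℕ → ℝ) (hn₁ : ∀ m, 2 ≤ n₁ m) (hn₂ : ∀ m, 2 ≤ n₂ m)
    (hn₁top : Tendsto n₁ atTop atTop) (hn₂top : Tendsto n₂ atTop atTop)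
    (A Sig₁ Sig₂ : ∀ m, Matrix (Fin (pd m)) (Fin (pd m)) ℝ)
    (hA : ∀ m, (A m).PosSemidef)
    (hSig₁ : ∀ m, (Sig₁ m).PosSemidef) (hSig₂ : ∀ m, (Sig₂ m).PosSemidef)
    (μ₁ μ₂ : ∀ m, Fin (pd m) → ℝ)
    (hH₁ : ∀ m, ((hA m).sqrt * Sig₁ m * (hA m).sqrt).IsHermitian)
    (hH₂ : ∀ m, ((hA m).sqrt * Sig₂ m * (hA m).sqrt).IsHermitian) :
    let μA : ∀ m, Fin (pd m) → ℝ := fun m => (hA m).sqrt *ᵥ (μ₁ m - μ₂ m)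
    let S₁ : ∀ m, Matrix (Fin (pd m)) (Fin (pd m)) ℝ :=
      fun m => (hA m).sqrt * Sig₁ m * (hA m).sqrt
    let S₂ : ∀ m, Matrix (Fin (pd m)) (Fin (pd m)) ℝ :=
      fun m => (hA m).sqrt * Sig₂ m * (hA m).sqrt
    let Δ : ℕ → ℝ := fun m => μA m ⬝ᵥ μA m
    let K₁ : ℕ → ℝ := fun m =>
      2 * ((S₁ m * S₁ m).trace / (n₁ m * (n₁ m - 1))
            + (S₂ m * S₂ m).trace / (n₂ m * (n₂ m - 1)))
        + 4 * (S₁ m * S₂ m).trace / (n₁ m * n₂ m)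
    let K₂ : ℕ → ℝ := fun m =>
      4 * ((μA m ⬝ᵥ (S₁ m *ᵥ μA m)) / n₁ m + (μA m ⬝ᵥ (S₂ m *ᵥ μA m)) / n₂ m)
    (∀ m, 0 < K₁ m) →
    Tendsto (fun m => (⨆ i, (hH₁ m).eigenvalues i) ^ 2 / (S₁ m * S₁ m).trace)
      atTop (nhds 0) →
    Tendsto (fun m => (⨆ i, (hH₂ m).eigenvalues i) ^ 2 / (S₂ m * S₂ m).trace)
      atTop (nhds 0) →
    (∃ C : ℝ, ∀ᶠ m in atTop, (Δ m) ^ 2 / K₁ m ≤ C) →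
    Tendsto (fun m => K₂ m / K₁ m) atTop (nhds 0) := by
  intro μA S₁ S₂ Δ K₁ K₂ hK₁ h1 h2 hCex
  obtain ⟨C, hC⟩ := hCex
  have hne : ∀ m, Nonempty (Fin (pd m)) := fun m => Fin.pos_iff_nonempty.mp (hp m)
  have hS₁psd : ∀ m, (S₁ m).PosSemidef := fun m => by
    have h := (hSig₁ m).mul_mul_conjTranspose_same (hA m).sqrt
    rwa [(psd_sqrt_isHermitian (hA m)).eq] at h
  have hS₂psd : ∀ m, (S₂ m).PosSemidef := fun m => by
    have h := (hSig₂ m).mul_mul_conjTranspose_same (hA m).sqrt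
    rwa [(psd_sqrt_isHermitian (hA m)).eq] at h
  set e₁ : ℕ → ℝ :=
    fun m => (⨆ i, (hH₁ m).eigenvalues i) / Real.sqrt ((S₁ m * S₁ m).trace) with he₁
  set e₂ : ℕ → ℝ :=
    fun m => (⨆ i, (hH₂ m).eigenvalues i) / Real.sqrt ((S₂ m * S₂ m).trace) with he₂
  have he₁tend : Tendsto e₁ atTop (nhds 0) := by
    have heq : e₁ = fun m =>
        Real.sqrt ((⨆ i, (hH₁ m).eigenvalues i) ^ 2 / (S₁ m * S₁ m).trace) := by
      funext m
      haveI := hne m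
      rw [Real.sqrt_div (sq_nonneg _), Real.sqrt_sq (sup_eig_nonneg (hS₁psd m))]
    rw [heq]
    simpa using h1.sqrt
  have he₂tend : Tendsto e₂ atTop (nhds 0) := by
    have heq : e₂ = fun m =>
        Real.sqrt ((⨆ i, (hH₂ m).eigenvalues i) ^ 2 / (S₂ m * S₂ m).trace) := by
      funext m
      haveI := hne m
      rw [Real.sqrt_div (sq_nonneg _), Real.sqrt_sq (sup_eig_nonneg (hS₂psd m))]
    rw [heq]
    simpa using h2.sqrt
  set g : ℕ → ℝ := fun m => 4 * Real.sqrt C / Real.sqrt 2 * (e₁ m + e₂ m) with hg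
  have hgtend : Tendsto g atTop (nhds 0) := by
    have := (he₁tend.add he₂tend).const_mul (4 * Real.sqrt C / Real.sqrt 2)
    simpa using this
  refine squeeze_zero' ?_ ?_ hgtend
  · filter_upwards with m
    have hn₁0 : (0:ℝ) < n₁ m := by linarith [hn₁ m]
    have hn₂0 : (0:ℝ) < n₂ m := by linarith [hn₂ m]
    refine div_nonneg ?_ (hK₁ m).le
    have q1 := quad_nonneg (hS₁psd m) (μA m)
    have q2 := quad_nonneg (hS₂psd m) (μA m)
    have : K₂ m = 4 * ((μA m ⬝ᵥ (S₁ m *ᵥ μA m)) / n₁ m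
        + (μA m ⬝ᵥ (S₂ m *ᵥ μA m)) / n₂ m) := rfl
    rw [this]
    positivity
  · filter_upwards [hC] with m hCm
    haveI := hne m
    have hn₁0 : (0:ℝ) < n₁ m := by linarith [hn₁ m]
    have hn₂0 : (0:ℝ) < n₂ m := by linarith [hn₂ m]
    have hK₁def : K₁ m = 2 * ((S₁ m * S₁ m).trace / (n₁ m * (n₁ m - 1))
            + (S₂ m * S₂ m).trace / (n₂ m * (n₂ m - 1)))
        + 4 * (S₁ m * S₂ m).trace / (n₁ m * n₂ m) := rfl
    have hc : 0 ≤ (S₁ m * S₂ m).trace := trace_mul_psd_nonneg (hS₁psd m) (hS₂psd m)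
    have ht₁ : 0 ≤ (S₁ m * S₁ m).trace :=
      le_trans (sq_nonneg _) (sup_sq_le_trace (hS₁psd m))
    have ht₂ : 0 ≤ (S₂ m * S₂ m).trace :=
      le_trans (sq_nonneg _) (sup_sq_le_trace (hS₂psd m))
    have hd₁ : (0:ℝ) < n₁ m * (n₁ m - 1) := by nlinarith [hn₁ m]
    have hd₂ : (0:ℝ) < n₂ m * (n₂ m - 1) := by nlinarith [hn₂ m]
    have htr₁ : (S₁ m * S₁ m).trace / (n₁ m * (n₁ m - 1)) ≤ K₁ m / 2 := by
      rw [hK₁def]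
      have h4 : 0 ≤ (S₂ m * S₂ m).trace / (n₂ m * (n₂ m - 1)) := by positivity
      have h5 : 0 ≤ 4 * (S₁ m * S₂ m).trace / (n₁ m * n₂ m) := by positivity
      linarith
    have htr₂ : (S₂ m * S₂ m).trace / (n₂ m * (n₂ m - 1)) ≤ K₁ m / 2 := by
      rw [hK₁def]
      have h4 : 0 ≤ (S₁ m * S₁ m).trace / (n₁ m * (n₁ m - 1)) := by positivity
      have h5 : 0 ≤ 4 * (S₁ m * S₂ m).trace / (n₁ m * n₂ m) := by positivity
      linarith
    have hΔsq : (μA m ⬝ᵥ μA m) ^ 2 ≤ C * K₁ m := by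
      rw [div_le_iff₀ (hK₁ m)] at hCm
      calc (μA m ⬝ᵥ μA m) ^ 2 = Δ m ^ 2 := rfl
        _ ≤ C * K₁ m := hCm
    have hb₁ : μA m ⬝ᵥ (S₁ m *ᵥ μA m) / n₁ m ≤
        e₁ m * (Real.sqrt C * (K₁ m / Real.sqrt 2)) :=
      term_bound (hS₁psd m) (μA m) (hn₁ m) (hK₁ m) htr₁ hΔsq
    have hb₂ : μA m ⬝ᵥ (S₂ m *ᵥ μA m) / n₂ m ≤
        e₂ m * (Real.sqrt C * (K₁ m / Real.sqrt 2)) :=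
      term_bound (hS₂psd m) (μA m) (hn₂ m) (hK₁ m) htr₂ hΔsq
    have hK₂def : K₂ m = 4 * ((μA m ⬝ᵥ (S₁ m *ᵥ μA m)) / n₁ m
        + (μA m ⬝ᵥ (S₂ m *ᵥ μA m)) / n₂ m) := rfl
    have hK₁ne : K₁ m ≠ 0 := (hK₁ m).ne'
    calc K₂ m / K₁ m
        ≤ 4 * ((e₁ m + e₂ m) * (Real.sqrt C * (K₁ m / Real.sqrt 2))) / K₁ m := by
          rw [hK₂def]
          gcongr 4 * ?_ / K₁ m
          rw [add_mul]
          exact add_le_add hb₁ hb₂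
        _ = g m := by
          rw [hg]
          have h2 : Real.sqrt 2 ≠ 0 := by positivity
          field_simp
end
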